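/- Every finite 2-subgroup of GL₂(ℤ) is conjugate in GL₂(ℤ) to a subgroup of the dihedral group of order 8 generated by the matrices A = [[0,-1],[1,0]] and B = [[1,0],[0,-1]]. -/

import Mathlib

open Matrix

private abbrev M2 := Matrix (Fin 2) (Fin 2) ℤ
private abbrev GL2 := Matrix.GeneralLinearGroup (Fin 2) ℤ

private lemma mul22 (a b c d e f g h : ℤ) :
    !![a,b;c,d] * !![e,f;g,h] = !![a*e+b*g, a*f+b*h; c*e+d*g, c*f+d*h] := by
  rw [Matrix.mul_fin_two]

private lemma one22 : (1 : M2) = !![1,0;0,1] := Matrix.one_fin_two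

private lemma negone22 : (-1 : M2) = !![-1,0;0,-1] := by
  simp [← Matrix.ext_iff, Fin.forall_fin_two, Matrix.one_fin_two]

private lemma eq22 {a b c d a' b' c' d' : ℤ} :
    !![a,b;c,d] = !![a',b';c',d'] ↔ a = a' ∧ b = b' ∧ c = c' ∧ d = d' := by
  constructor
  · intro h
    have := fun i j => Matrix.ext_iff.mpr h i j
    exact ⟨this 0 0, this 0 1, this 1 0, this 1 1⟩
  · rintro ⟨rfl, rfl, rfl, rfl⟩; rfl

private def mkGL (m : M2) (h : m.det * m.det = 1) : GL2 :=
  ⟨m, m.det • m.adjugate, by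
    rw [mul_smul_comm, Matrix.mul_adjugate, smul_smul, h, one_smul],
   by rw [smul_mul_assoc, Matrix.adjugate_mul, smul_smul, h, one_smul]⟩

@[simp] private lemma mkGL_coe (m : M2) (h) : ((mkGL m h : GL2) : M2) = m := rfl

private def gA : GL2 := mkGL !![0,-1;1,0] (by norm_num [Matrix.det_fin_two_of])
private def gB : GL2 := mkGL !![1,0;0,-1] (by norm_num [Matrix.det_fin_two_of])
private def gAB : GL2 := mkGL !![0,1;1,0] (by norm_num [Matrix.det_fin_two_of])

private lemma val_gA : (gA : M2) = !![0,-1;1,0] := rfl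
private lemma val_gB : (gB : M2) = !![1,0;0,-1] := rfl
private lemma val_gAB : (gAB : M2) = !![0,1;1,0] := rfl
private lemma val_mul (x y : GL2) : ((x*y : GL2) : M2) = (x:M2) * (y:M2) := rfl

private lemma val_gAgA : ((gA*gA : GL2) : M2) = -1 := by
  rw [val_mul, val_gA, mul22, negone22]; norm_num
private lemma val_gA3 : ((gA*gA*gA : GL2) : M2) = !![0,1;-1,0] := by
  rw [val_mul, val_gAgA, val_gA, negone22, mul22]; norm_num
private lemma val_negB : ((gA*gA*gB : GL2) : M2) = !![-1,0;0,1] := by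
  rw [val_mul, val_gAgA, val_gB, negone22, mul22]; norm_num
private lemma val_ABu : ((gA*gB : GL2) : M2) = !![0,1;1,0] := by
  rw [val_mul, val_gA, val_gB, mul22]; norm_num
private lemma val_negAB : ((gA*gA*gA*gB : GL2) : M2) = !![0,-1;-1,0] := by
  rw [val_mul, val_gA3, val_gB, mul22]; norm_num

private lemma det_gA : (gA : M2).det = 1 := by
  rw [val_gA, Matrix.det_fin_two_of]; norm_num

private lemma gB_sq : gB * gB = 1 := by
  apply Units.ext; rw [val_mul, val_gB, mul22, Units.val_one, one22]; norm_num
private lemma gAB_sq : gAB * gAB = 1 := by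
  apply Units.ext; rw [val_mul, val_gAB, mul22, Units.val_one, one22]; norm_num

private lemma conj_step {x y : GL2} (g : GL2) (h : (x:M2) * (g:M2) = (g:M2) * (y:M2)) :
    g⁻¹ * x * g = y := by
  have h' : x * g = g * y := Units.ext (by simpa using h)
  rw [mul_assoc, h', ← mul_assoc, inv_mul_cancel, one_mul]

private lemma conj_comp {x y z g h : GL2} (h1 : g⁻¹ * x * g = y) (h2 : h⁻¹ * y * h = z) :
    (g*h)⁻¹ * x * (g*h) = z := by
  rw [_root_.mul_inv_rev, ← h2, ← h1]; group

private lemma conj_negone (g x : GL2) (hx : (x:M2) = -1) : ((g⁻¹*x*g : GL2):M2) = -1 := by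
  rw [val_mul, val_mul, hx, mul_neg_one, neg_mul, ← val_mul, inv_mul_cancel, Units.val_one]

private lemma unconj_sq (g x : GL2)
    (h : ((g*x*g⁻¹:GL2):M2) * ((g*x*g⁻¹:GL2):M2) = -1) : (x:M2)*(x:M2) = -1 := by
  have h1 : ((g*(x*x)*g⁻¹ : GL2):M2) = -1 := by
    rw [show g*(x*x)*g⁻¹ = (g*x*g⁻¹)*(g*x*g⁻¹) by group, val_mul, h]
  have h2 : x*x = g⁻¹ * (g*(x*x)*g⁻¹) * g := by group
  rw [← val_mul, h2]
  exact conj_negone g _ h1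

private lemma no_sqrt2 (t : ℤ) : t*t ≠ 2 := by
  intro h
  rcases le_or_gt t (-2) with h1 | h1
  · nlinarith
  rcases le_or_gt 2 t with h2 | h2
  · nlinarith
  interval_cases t <;> omega

private lemma detpm (h : GL2) : (h : M2).det = 1 ∨ (h : M2).det = -1 :=
  Int.isUnit_iff.mp ((Matrix.isUnit_iff_isUnit_det _).mp h.isUnit)

private lemma classify_core (a b c d : ℤ)
    (hD : a*d - b*c = 1 ∨ a*d - b*c = -1)
    (hsq : (!![a,b;c,d] * !![a,b;c,d] = (1:M2)) ∨ (!![a,b;c,d] * !![a,b;c,d] = (-1:M2))) :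
    (!![a,b;c,d] = (1:M2)) ∨ (!![a,b;c,d] = (-1:M2)) ∨
    (d = -a ∧ ((a*d - b*c = 1 ∧ !![a,b;c,d] * !![a,b;c,d] = (-1:M2)) ∨
               (a*d - b*c = -1 ∧ !![a,b;c,d] * !![a,b;c,d] = (1:M2)))) := by
  rcases hsq with hs | hs
  · have hs' := hs
    rw [mul22, one22, eq22] at hs'
    obtain ⟨e1, e2, e3, e4⟩ := hs'
    by_cases ht : a + d = 0
    · right; right
      refine ⟨by linarith, Or.inr ⟨by nlinarith, hs⟩⟩
    · have hb0 : b = 0 := by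
        rcases mul_eq_zero.mp (show b * (a+d) = 0 by nlinarith) with h' | h'
        · exact h'
        · exact absurd h' ht
      have hc0 : c = 0 := by
        rcases mul_eq_zero.mp (show c * (a+d) = 0 by nlinarith) with h' | h'
        · exact h'
        · exact absurd h' ht
      subst hb0 hc0
      have ha1 : a = 1 ∨ a = -1 := by
        have h1 : a * a = 1 := by linarith
        rcases (Int.eq_one_or_neg_one_of_mul_eq_one' h1) with ⟨h', _⟩ | ⟨h', _⟩
        · exact Or.inl h'
        · exact Or.inr h'
      have hda : d = a := by
        rcases ha1 with h' | h' <;> subst h' <;> rcases hD with hD | hD <;> omega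
      subst hda
      rcases ha1 with h' | h' <;> subst h'
      · left; rw [one22]
      · right; left; rw [negone22]
  · have hs' := hs
    rw [mul22, negone22, eq22] at hs'
    obtain ⟨e1, e2, e3, e4⟩ := hs'
    have ht : a + d = 0 := by
      by_contra ht
      have hb0 : b = 0 := by
        rcases mul_eq_zero.mp (show b * (a+d) = 0 by nlinarith) with h' | h'
        · exact h'
        · exact absurd h' ht
      subst hb0
      nlinarith [sq_nonneg a]
    right; right
    exact ⟨by linarith, Or.inl ⟨by nlinarith, hs⟩⟩

private lemma classify (n : ℕ) : ∀ h : GL2, h ^ (2^n) = 1 →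
    (h:M2) = 1 ∨ (h:M2) = -1 ∨
    ((h:M2) 1 1 = -((h:M2) 0 0) ∧
      (((h:M2).det = 1 ∧ (h:M2)*(h:M2) = -1) ∨ ((h:M2).det = -1 ∧ (h:M2)*(h:M2) = 1))) := by
  induction n with
  | zero =>
    intro h hn
    left
    have : h = 1 := by simpa using hn
    rw [this]; rfl
  | succ n ih =>
    intro h hn
    have hsq : (h*h) ^ (2^n) = 1 := by
      rw [← sq, ← pow_mul, ← pow_succ']; exact hn
    have key := ih (h*h) hsq
    have hvm : ((h*h : GL2) : M2) = (h:M2) * (h:M2) := rfl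
    obtain ⟨a, b, c, d, heta⟩ : ∃ a b c d, (h:M2) = !![a,b;c,d] :=
      ⟨_,_,_,_, Matrix.eta_fin_two _⟩
    have hD : a*d - b*c = 1 ∨ a*d - b*c = -1 := by
      have := detpm h
      rwa [heta, Matrix.det_fin_two_of] at this
    rw [hvm, heta] at key
    rw [heta, Matrix.det_fin_two_of]
    rcases key with h1 | h1 | ⟨htr, hrest⟩
    · have := classify_core a b c d hD (Or.inl h1)
      simpa [eq22] using this
    · have := classify_core a b c d hD (Or.inr h1)
      simpa [eq22] using this
    · exfalso
      rw [mul22] at htr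
      simp at htr
      rcases hrest with ⟨hdet1, _⟩ | ⟨hdetm1, _⟩
      · rw [Matrix.det_mul, Matrix.det_fin_two_of] at hdet1
        rcases hD with hD | hD
        · exact no_sqrt2 (a+d) (by nlinarith [htr, hD])
        · nlinarith [htr, hD, sq_nonneg (a+d)]
      · rw [Matrix.det_mul, Matrix.det_fin_two_of] at hdetm1
        rcases hD with hD | hD <;> rw [hD] at hdetm1 <;> norm_num at hdetm1

private lemma rep_one (fuel : ℕ) : ∀ c a b : ℤ, c ≤ (fuel : ℤ) → 0 < c → a*a + b*c = -1 →
    ∃ x y : ℤ, c*x*x - 2*a*x*y - b*y*y = 1 := by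
  induction fuel with
  | zero => intro c a b h1 h2 _; omega
  | succ n ih =>
    intro c a b hle hpos hinv
    rcases eq_or_lt_of_le (show (1:ℤ) ≤ c from hpos) with h1 | h1
    · exact ⟨1, 0, by rw [← h1]; ring⟩
    · have hqr : c * (a / c) + a % c = a := Int.mul_ediv_add_emod a c
      have hr0 : 0 ≤ a % c := Int.emod_nonneg a (ne_of_gt hpos)
      have hrc : a % c < c := Int.emod_lt_of_pos a hpos
      obtain ⟨k, hr4⟩ : ∃ k : ℤ, 4*((a-c*k)*(a-c*k)) ≤ c*c := by
        by_cases h2 : 2*(a % c) ≤ c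
        · refine ⟨a / c, ?_⟩
          have he : a - c*(a/c) = a % c := by linarith
          rw [he]; nlinarith
        · refine ⟨a / c + 1, ?_⟩
          have he : a - c*(a/c+1) = a % c - c := by ring_nf; linarith
          rw [he]
          nlinarith [mul_pos (show (0:ℤ) < 2*(a%c)-c by omega)
            (show (0:ℤ) < 3*c-2*(a%c) by omega)]
      set c' := c*k*k - 2*a*k - b with hc'
      have key : c * c' = (a-c*k)*(a-c*k) + 1 := by linear_combination (-1 : ℤ) * hinv
      have hc'pos : 0 < c' := by nlinarith [sq_nonneg (a-c*k)]
      have hc'lt : c' < c := by nlinarith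
      obtain ⟨x, y, hxy⟩ := ih c' (a - c*k) (-c) (by omega) hc'pos
        (by linear_combination -key)
      exact ⟨k*x + y, x, by linear_combination hxy⟩

private lemma conjA_pos (u : GL2) (a b c : ℤ) (heta : (u:M2) = !![a,b;c,-a])
    (hinv : a*a + b*c = -1) (hc : 0 < c) : ∃ g : GL2, g * u * g⁻¹ = gA := by
  obtain ⟨x, y, hxy⟩ := rep_one c.toNat c a b (by omega) hc hinv
  have hdet : (!![x, a*x+b*y; y, c*x-a*y] : M2).det = 1 := by
    rw [Matrix.det_fin_two_of]; linear_combination hxy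
  refine ⟨(mkGL !![x, a*x+b*y; y, c*x-a*y] (by rw [hdet]; ring))⁻¹, ?_⟩
  rw [inv_inv]
  apply conj_step
  rw [heta, mkGL_coe]
  show _ = _ * (!![0,-1;1,0] : M2)
  rw [mul22, mul22, eq22]
  refine ⟨by ring, by linear_combination x*hinv, by ring, by linear_combination y*hinv⟩

private lemma gB_inv : gB⁻¹ = gB := inv_eq_of_mul_eq_one_right gB_sq
private lemma gAB_inv : gAB⁻¹ = gAB := inv_eq_of_mul_eq_one_right gAB_sq

private lemma conjA (u : GL2) (hu : (u:M2) * (u:M2) = -1) : ∃ g : GL2, g * u * g⁻¹ = gA := by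
  obtain ⟨a, b, c, d, heta⟩ : ∃ a b c d, (u:M2) = !![a,b;c,d] :=
    ⟨_,_,_,_, Matrix.eta_fin_two _⟩
  rw [heta, mul22, negone22, eq22] at hu
  obtain ⟨e1, e2, e3, e4⟩ := hu
  have hda : d = -a := by
    by_contra hda
    have hb0 : b = 0 := by
      rcases mul_eq_zero.mp (show b * (a+d) = 0 by linarith) with h' | h'
      · exact h'
      · exact absurd (show d = -a by linarith) hda
    subst hb0; nlinarith [sq_nonneg a]
  subst hda
  rcases lt_trichotomy c 0 with hc | hc | hc
  · have hBB : ((gB * u * gB⁻¹ : GL2) : M2) = !![a,-b;-c,-a] := by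
      rw [gB_inv]
      show (gB:M2) * (u:M2) * (gB:M2) = _
      rw [heta, val_gB, mul22, mul22, eq22]
      refine ⟨by ring, by ring, by ring, by ring⟩
    obtain ⟨g, hg⟩ := conjA_pos (gB * u * gB⁻¹) a (-b) (-c) hBB
      (by linear_combination e1) (by omega)
    refine ⟨g * gB, ?_⟩
    rw [_root_.mul_inv_rev, ← hg]
    group
  · exfalso; subst hc; nlinarith [sq_nonneg a]
  · exact conjA_pos u a b c heta e1 hc

private lemma conjB (v : GL2) (p q r : ℤ) (heta : (v:M2) = !![p,q;r,-p])
    (hinv : p*p + q*r = 1) :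
    ∃ g : GL2, g * v * g⁻¹ = gB ∨ g * v * g⁻¹ = gAB := by
  obtain ⟨w₁, w₂, hwne, hf1, hf2⟩ : ∃ w₁ w₂ : ℤ, ¬(w₁ = 0 ∧ w₂ = 0) ∧
      p*w₁ + q*w₂ = w₁ ∧ r*w₁ - p*w₂ = w₂ := by
    by_cases hpr : p + 1 = 0 ∧ r = 0
    · exact ⟨q, 1-p, by omega, by ring, by linear_combination hinv⟩
    · exact ⟨p+1, r, by tauto, by linear_combination hinv, by ring⟩
  have hdpos : 0 < Int.gcd w₁ w₂ := Int.gcd_pos_iff.mpr (by tauto)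
  have hD0 : (Int.gcd w₁ w₂ : ℤ) ≠ 0 := by exact_mod_cast hdpos.ne'
  set e₁ : ℤ := w₁ / (Int.gcd w₁ w₂ : ℤ) with he₁
  set e₂ : ℤ := w₂ / (Int.gcd w₁ w₂ : ℤ) with he₂
  have hw1 : (Int.gcd w₁ w₂ : ℤ) * e₁ = w₁ := Int.mul_ediv_cancel' (Int.gcd_dvd_left w₁ w₂)
  have hw2 : (Int.gcd w₁ w₂ : ℤ) * e₂ = w₂ := Int.mul_ediv_cancel' (Int.gcd_dvd_right w₁ w₂)
  have hcop : IsCoprime e₁ e₂ :=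
    Int.isCoprime_iff_gcd_eq_one.mpr (Int.gcd_div_gcd_div_gcd hdpos)
  obtain ⟨m, n, hmn⟩ := hcop
  have hfe1 : p*e₁ + q*e₂ = e₁ :=
    mul_left_cancel₀ hD0 (by linear_combination p*hw1 + q*hw2 - hw1 + hf1)
  have hfe2 : r*e₁ - p*e₂ = e₂ :=
    mul_left_cancel₀ hD0 (by linear_combination r*hw1 - p*hw2 - hw2 + hf2)
  have hdet1 : (!![e₁, -n; e₂, m] : M2).det = 1 := by
    rw [Matrix.det_fin_two_of]; linear_combination hmn
  set g1 : GL2 := mkGL !![e₁, -n; e₂, m] (by rw [hdet1]; ring) with hg1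
  have ht : -e₂*(-p*n+q*m) + e₁*(-r*n-p*m) = -1 := by
    linear_combination (-m)*hfe1 + (-n)*hfe2 + (-1)*hmn
  obtain ⟨s, hvg⟩ : ∃ s : ℤ, g1⁻¹ * v * g1 = mkGL !![1, s; 0, -1] (by
      rw [Matrix.det_fin_two_of]; ring) := by
    refine ⟨m*(-p*n+q*m) + n*(-r*n-p*m), conj_step g1 ?_⟩
    rw [heta, mkGL_coe, mkGL_coe, mul22, mul22, eq22]
    refine ⟨by linear_combination hfe1,
      by linear_combination (p*n - q*m) * hmn + (-n) * ht,
      by linear_combination hfe2,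
      by linear_combination (r*n + p*m) * hmn + m * ht⟩
  rcases Int.even_or_odd s with ⟨k, hk⟩ | ⟨k, hk⟩
  · have hT : (mkGL !![1, -k; 0, 1] (by rw [Matrix.det_fin_two_of]; ring))⁻¹ *
        (mkGL !![1, s; 0, -1] (by rw [Matrix.det_fin_two_of]; ring)) *
        (mkGL !![1, -k; 0, 1] (by rw [Matrix.det_fin_two_of]; ring)) = gB := by
      apply conj_step
      rw [mkGL_coe, mkGL_coe]
      show _ = _ * (!![1,0;0,-1] : M2)
      rw [mul22, mul22, eq22]
      refine ⟨by ring, by omega, by ring, by ring⟩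
    refine ⟨(g1 * mkGL !![1, -k; 0, 1] (by rw [Matrix.det_fin_two_of]; ring))⁻¹, Or.inl ?_⟩
    rw [inv_inv]
    exact conj_comp hvg hT
  · have hT : (mkGL !![1, -k; 0, 1] (by rw [Matrix.det_fin_two_of]; ring))⁻¹ *
        (mkGL !![1, s; 0, -1] (by rw [Matrix.det_fin_two_of]; ring)) *
        (mkGL !![1, -k; 0, 1] (by rw [Matrix.det_fin_two_of]; ring)) =
        mkGL !![1, 1; 0, -1] (by rw [Matrix.det_fin_two_of]; ring) := by
      apply conj_step
      rw [mkGL_coe, mkGL_coe, mkGL_coe, mul22, mul22, eq22]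
      refine ⟨by ring, by omega, by ring, by ring⟩
    have hG2 : (mkGL !![1, 0; -1, 1] (by rw [Matrix.det_fin_two_of]; ring))⁻¹ *
        (mkGL !![1, 1; 0, -1] (by rw [Matrix.det_fin_two_of]; ring)) *
        (mkGL !![1, 0; -1, 1] (by rw [Matrix.det_fin_two_of]; ring)) = gAB := by
      apply conj_step
      rw [mkGL_coe, mkGL_coe]
      show _ = _ * (!![0,1;1,0] : M2)
      rw [mul22, mul22, eq22]
      refine ⟨by ring, by ring, by ring, by ring⟩
    refine ⟨(g1 * mkGL !![1, -k; 0, 1] (by rw [Matrix.det_fin_two_of]; ring) *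
      mkGL !![1, 0; -1, 1] (by rw [Matrix.det_fin_two_of]; ring))⁻¹, Or.inr ?_⟩
    rw [inv_inv]
    exact conj_comp (conj_comp hvg hT) hG2

theorem stmt_5 (H : Subgroup (Matrix.GeneralLinearGroup (Fin 2) ℤ))
    [Finite H] (hH : IsPGroup 2 H) :
    ∃ A B : Matrix.GeneralLinearGroup (Fin 2) ℤ,
      (A : Matrix (Fin 2) (Fin 2) ℤ) = !![0, -1; 1, 0] ∧
      (B : Matrix (Fin 2) (Fin 2) ℤ) = !![1, 0; 0, -1] ∧
      ∃ g : Matrix.GeneralLinearGroup (Fin 2) ℤ,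
        ∀ h ∈ H, g * h * g⁻¹ ∈ Subgroup.closure {A, B} := by
  refine ⟨gA, gB, rfl, rfl, ?_⟩
  have torsion : ∀ h ∈ H, ∃ n : ℕ, h ^ (2^n : ℕ) = 1 := by
    intro h hh
    obtain ⟨n, hn⟩ := hH ⟨h, hh⟩
    refine ⟨n, ?_⟩
    have := congrArg (fun x : H => (x : GL2)) hn
    simpa using this
  have hA : gA ∈ Subgroup.closure {gA, gB} :=
    Subgroup.subset_closure (by left; rfl)
  have hB : gB ∈ Subgroup.closure {gA, gB} :=
    Subgroup.subset_closure (by right; rfl)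
  have hABC : gAB ∈ Subgroup.closure {gA, gB} := by
    have : gAB = gA * gB := Units.ext (by rw [val_gAB, val_ABu])
    rw [this]; exact mul_mem hA hB
  have mem_one' : ∀ k : GL2, (k:M2) = 1 → k ∈ Subgroup.closure {gA, gB} := by
    intro k h
    have : k = 1 := Units.ext (by rw [h]; rfl)
    rw [this]; exact one_mem _
  have mem_negone : ∀ k : GL2, (k:M2) = -1 → k ∈ Subgroup.closure {gA, gB} := by
    intro k h
    have : k = gA * gA := Units.ext (by rw [h, val_gAgA])
    rw [this]; exact mul_mem hA hA
  -- classification of conjugates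
  have kclass : ∀ g : GL2, ∀ x ∈ H,
      ((g*x*g⁻¹ : GL2):M2) = 1 ∨ ((g*x*g⁻¹:GL2):M2) = -1 ∨
      (((g*x*g⁻¹:GL2):M2) 1 1 = -(((g*x*g⁻¹:GL2):M2) 0 0) ∧
        ((((g*x*g⁻¹:GL2):M2).det = 1 ∧ ((g*x*g⁻¹:GL2):M2)*((g*x*g⁻¹:GL2):M2) = -1) ∨
         (((g*x*g⁻¹:GL2):M2).det = -1 ∧ ((g*x*g⁻¹:GL2):M2)*((g*x*g⁻¹:GL2):M2) = 1))) := by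
    intro g x hx
    obtain ⟨n, hn⟩ := torsion x hx
    exact classify n _ (by rw [conj_pow, hn, mul_one, mul_inv_cancel])
  by_cases hu : ∃ u ∈ H, (u:M2) * (u:M2) = -1
  · -- Case 1 : there is an element of order 4
    obtain ⟨u, huH, hu2⟩ := hu
    obtain ⟨g, hg⟩ := conjA u hu2
    refine ⟨g, fun h hh => ?_⟩
    rcases kclass g h hh with h1 | h1 | ⟨htr, hrest⟩
    · exact mem_one' _ h1
    · exact mem_negone _ h1
    · obtain ⟨a, b, c, d, heta⟩ : ∃ a b c d, ((g*h*g⁻¹:GL2):M2) = !![a,b;c,d] :=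
        ⟨_,_,_,_, Matrix.eta_fin_two _⟩
      have hd : d = -a := by
        rw [heta] at htr; simpa using htr
      subst hd
      have hhu : h*u ∈ H := mul_mem hh huH
      have hkey : g*(h*u)*g⁻¹ = (g*h*g⁻¹) * gA := by rw [← hg]; group
      have hvalkA : ((g*(h*u)*g⁻¹ : GL2):M2) = !![b,-a;-a,-c] := by
        rw [hkey, val_mul, heta, val_gA, mul22, eq22]
        refine ⟨by ring, by ring, by ring, by ring⟩
      have hdetkA : ((g*(h*u)*g⁻¹ : GL2):M2).det = ((g*h*g⁻¹:GL2):M2).det := by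
        rw [hkey, val_mul, Matrix.det_mul, det_gA, mul_one]
      rcases hrest with ⟨hdet1, hsq⟩ | ⟨hdetm1, hsq⟩
      · -- k has order 4
        rcases kclass g (h*u) hhu with h2 | h2 | ⟨htr2, hrest2⟩
        · -- k * gA = 1, so k = gA⁻¹
          have he : (g*h*g⁻¹) * gA = 1 := by
            rw [← hkey]; exact Units.ext (by rw [h2]; rfl)
          rw [eq_inv_of_mul_eq_one_left he]
          exact inv_mem hA
        · -- k * gA = -1, so k = gA
          have he : (g*h*g⁻¹) * gA = gA * gA := by
            rw [← hkey]
            exact Units.ext (by rw [h2, val_gAgA])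
          have : (g*h*g⁻¹) = gA * gA * gA⁻¹ := by
            rw [← he]; group
          rw [this]
          exact mul_mem (mul_mem hA hA) (inv_mem hA)
        · exfalso
          have hcb : c = b := by
            rw [hvalkA] at htr2; simpa using htr2
          rcases hrest2 with ⟨_, hsq2⟩ | ⟨hdm, _⟩
          · rw [hvalkA, hcb, mul22, negone22, eq22] at hsq2
            obtain ⟨f1, _⟩ := hsq2
            nlinarith [f1, sq_nonneg a, sq_nonneg b]
          · rw [hdetkA, hdet1] at hdm; norm_num at hdm
      · -- k is a reflection
        have hpq : a*a + b*c = 1 := by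
          rw [heta, Matrix.det_fin_two_of] at hdetm1; linarith [hdetm1]
        rcases kclass g (h*u) hhu with h2 | h2 | ⟨htr2, hrest2⟩
        · exfalso
          have : ((g*(h*u)*g⁻¹ : GL2):M2).det = 1 := by rw [h2, Matrix.det_one]
          rw [hdetkA, hdetm1] at this; norm_num at this
        · exfalso
          have : ((g*(h*u)*g⁻¹ : GL2):M2).det = 1 := by
            rw [h2, negone22, Matrix.det_fin_two_of]; norm_num
          rw [hdetkA, hdetm1] at this; norm_num at this
        · have hcb : c = b := by
            rw [hvalkA] at htr2; simpa using htr2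
          subst hcb
          have hab : a*a + c*c = 1 := by linarith [hpq]
          have ha1 : -1 ≤ a ∧ a ≤ 1 := by
            constructor <;> nlinarith [sq_nonneg c]
          have hb1 : -1 ≤ c ∧ c ≤ 1 := by
            constructor <;> nlinarith [sq_nonneg a]
          obtain ⟨ha1l, ha1r⟩ := ha1
          obtain ⟨hb1l, hb1r⟩ := hb1
          interval_cases a <;> interval_cases c <;> norm_num at hab
          · -- a = -1, c = 0 : k = -B
            have : (g*h*g⁻¹) = gA*gA*gB :=
              Units.ext (by rw [heta, val_negB]; try norm_num [eq22])
            rw [this]; exact mul_mem (mul_mem hA hA) hB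
          · -- a = 0, c = -1 : k = -AB
            have : (g*h*g⁻¹) = gA*gA*gA*gB :=
              Units.ext (by rw [heta, val_negAB]; try norm_num [eq22])
            rw [this]; exact mul_mem (mul_mem (mul_mem hA hA) hA) hB
          · -- a = 0, c = 1 : k = AB
            have : (g*h*g⁻¹) = gAB :=
              Units.ext (by rw [heta, val_gAB]; try norm_num [eq22])
            rw [this]; exact hABC
          · -- a = 1, c = 0 : k = B
            have : (g*h*g⁻¹) = gB :=
              Units.ext (by rw [heta, val_gB]; try norm_num [eq22])
            rw [this]; exact hB
  · -- Case 2 : no element of order 4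
    by_cases hv : ∃ v ∈ H, (v:M2) 1 1 = -((v:M2) 0 0) ∧ (v:M2).det = -1 ∧ (v:M2)*(v:M2) = 1
    · obtain ⟨v, hvH, hvtr, hvdet, _⟩ := hv
      obtain ⟨p, q, r, d, heta⟩ : ∃ p q r d, (v:M2) = !![p,q;r,d] :=
        ⟨_,_,_,_, Matrix.eta_fin_two _⟩
      have hd : d = -p := by rw [heta] at hvtr; simpa using hvtr
      subst hd
      have hinv : p*p + q*r = 1 := by
        rw [heta, Matrix.det_fin_two_of] at hvdet; linarith [hvdet]
      obtain ⟨g, hg⟩ := conjB v p q r heta hinv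
      refine ⟨g, fun h hh => ?_⟩
      rcases kclass g h hh with h1 | h1 | ⟨htr, hrest⟩
      · exact mem_one' _ h1
      · exact mem_negone _ h1
      · rcases hrest with ⟨hdet1, hsq⟩ | ⟨hdetm1, hsq⟩
        · exact absurd ⟨h, hh, unconj_sq g h hsq⟩ hu
        · -- k is a reflection: use k * v'
          have hhv : h*v ∈ H := mul_mem hh hvH
          have hkey : g*(h*v)*g⁻¹ = (g*h*g⁻¹) * (g*v*g⁻¹) := by group
          have hdetv' : ((g*v*g⁻¹:GL2):M2).det = -1 := by
            rcases hg with hg' | hg' <;> rw [hg']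
            · rw [val_gB, Matrix.det_fin_two_of]; norm_num
            · rw [val_gAB, Matrix.det_fin_two_of]; norm_num
          have hdetkv : ((g*(h*v)*g⁻¹ : GL2):M2).det = 1 := by
            rw [hkey, val_mul, Matrix.det_mul, hdetm1, hdetv']; norm_num
          rcases kclass g (h*v) hhv with h2 | h2 | ⟨htr2, hrest2⟩
          · -- k * v' = 1 : k = v'⁻¹ = v'
            have he : (g*h*g⁻¹) * (g*v*g⁻¹) = 1 := by
              rw [← hkey]; exact Units.ext (by rw [h2]; rfl)
            rw [eq_inv_of_mul_eq_one_left he]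
            rcases hg with hg' | hg' <;> rw [hg']
            · rw [gB_inv]; exact hB
            · rw [gAB_inv]; exact hABC
          · -- k * v' = -1 : k = (gA*gA) * v'⁻¹
            have he : (g*h*g⁻¹) * (g*v*g⁻¹) = gA*gA := by
              rw [← hkey]; exact Units.ext (by rw [h2, val_gAgA])
            have : (g*h*g⁻¹) = (gA*gA) * (g*v*g⁻¹)⁻¹ := by
              rw [← he]; group
            rw [this]
            refine mul_mem (mul_mem hA hA) (inv_mem ?_)
            rcases hg with hg' | hg' <;> rw [hg']
            · exact hB
            · exact hABC
          · rcases hrest2 with ⟨_, hsq2⟩ | ⟨hdm, _⟩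
            · exact absurd ⟨h*v, hhv, unconj_sq g (h*v) hsq2⟩ hu
            · rw [hdetkv] at hdm; norm_num at hdm
    · -- every element is ±1
      refine ⟨1, fun h hh => ?_⟩
      rw [one_mul, inv_one, mul_one]
      obtain ⟨n, hn⟩ := torsion h hh
      rcases classify n h hn with h1 | h1 | ⟨htr, hrest⟩
      · exact mem_one' _ h1
      · exact mem_negone _ h1
      · rcases hrest with ⟨_, hsq⟩ | ⟨hdet, hsq⟩
        · exact absurd ⟨h, hh, hsq⟩ hu
        · exact absurd ⟨h, hh, htr, hdet, hsq⟩ hv
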